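/- Let c < d be real numbers and f ∈ L¹[c,d]. Then ∫_c^d e^{iρ(t−c)} f(t) dt = o(e^{|Im ρ|(d−c)}) as the complex number ρ tends to infinity; that is, for every ε > 0 there exists R > 0 such that for all complex ρ with |ρ| > R, |∫_c^d e^{iρ(t−c)} f(t) dt| ≤ ε · e^{|Im ρ|(d−c)}. -/

import Mathlib

open MeasureTheory Complex

lemma exp_bound_aux (c d : ℝ) (ρ : ℂ) {t : ℝ} (ht : t ∈ Set.Icc c d) :
    ‖Complex.exp (Complex.I * ρ * ((t : ℂ) - c))‖ ≤ Real.exp (|ρ.im| * (d - c)) := by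
  rw [Complex.norm_exp, Real.exp_le_exp]
  have h : (Complex.I * ρ * ((t : ℂ) - (c : ℂ))).re = -ρ.im * (t - c) := by
    simp [Complex.mul_re, Complex.mul_im]
  rw [h]
  have h1 : 0 ≤ t - c := by linarith [ht.1]
  have h2 : t - c ≤ d - c := by linarith [ht.2]
  calc -ρ.im * (t - c) ≤ |ρ.im| * (t - c) :=
        mul_le_mul_of_nonneg_right (neg_le_abs _) h1
    _ ≤ |ρ.im| * (d - c) := mul_le_mul_of_nonneg_left h2 (abs_nonneg _)

lemma decay_aux (c d : ℝ) (hcd : c < d) (h h' : ℝ → ℂ)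
    (hd : ∀ t, HasDerivAt h (h' t) t) (hc' : Continuous h') :
    ∃ C > 0, ∀ ρ : ℂ, ρ ≠ 0 →
      ‖∫ t in c..d, Complex.exp (Complex.I * ρ * ((t : ℂ) - c)) * h t‖
        ≤ C * Real.exp (|ρ.im| * (d - c)) / ‖ρ‖ := by
  have hch : Continuous h := by
    rw [continuous_iff_continuousAt]; exact fun t => (hd t).continuousAt
  set C : ℝ := ‖h c‖ + ‖h d‖
      + (∫ t in c..d, ‖h' t‖) + 1 with hC
  have hint : 0 ≤ ∫ t in c..d, ‖h' t‖ :=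
    intervalIntegral.integral_nonneg hcd.le (fun t _ => norm_nonneg _)
  have hCpos : 0 < C := by positivity
  refine ⟨C, hCpos, fun ρ hρ => ?_⟩
  set z : ℂ := Complex.I * ρ with hz
  have hzne : z ≠ 0 := mul_ne_zero Complex.I_ne_zero hρ
  set M : ℝ := Real.exp (|ρ.im| * (d - c)) with hM
  have hM1 : 1 ≤ M := Real.one_le_exp (mul_nonneg (abs_nonneg _) (by linarith))
  set E : ℝ → ℂ := fun t => Complex.exp (z * ((t : ℂ) - c)) with hE
  have hEc : Continuous E := by fun_prop
  have hEd : ∀ t : ℝ, HasDerivAt E (z * E t) t := by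
    intro t
    have h1 : HasDerivAt (fun w : ℂ => z * (w - c)) z ((t : ℝ) : ℂ) := by
      simpa using ((hasDerivAt_id ((t : ℝ) : ℂ)).sub_const (c : ℂ)).const_mul z
    have h2 : HasDerivAt (fun w : ℂ => Complex.exp (z * (w - c)))
        (z * Complex.exp (z * (((t : ℝ) : ℂ) - c))) ((t : ℝ) : ℂ) := by
      simpa [mul_comm] using h1.cexp
    exact h2.comp_ofReal
  have hΦ : ∀ t : ℝ, HasDerivAt (fun t => E t * h t) (z * E t * h t + E t * h' t) t := by
    intro t
    have := (hEd t).mul (hd t)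
    exact this.congr_deriv (by ring)
  have hInt1 : IntervalIntegrable (fun t => z * E t * h t + E t * h' t) volume c d := by
    apply Continuous.intervalIntegrable; fun_prop
  have hftc : (∫ t in c..d, (z * E t * h t + E t * h' t)) = E d * h d - E c * h c :=
    intervalIntegral.integral_eq_sub_of_hasDerivAt (fun t _ => hΦ t) hInt1
  have hInt2 : IntervalIntegrable (fun t => E t * h t) volume c d := by
    apply Continuous.intervalIntegrable; fun_prop
  have hInt3 : IntervalIntegrable (fun t => E t * h' t) volume c d := by
    apply Continuous.intervalIntegrable; fun_prop
  have hsplit : z * (∫ t in c..d, E t * h t)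
      = E d * h d - E c * h c - ∫ t in c..d, E t * h' t := by
    rw [← intervalIntegral.integral_const_mul]
    rw [← hftc, ← intervalIntegral.integral_sub hInt1 hInt3]
    congr 1; ext t; ring
  have hEbound : ∀ t ∈ Set.Icc c d, ‖E t‖ ≤ M := fun t ht =>
    exp_bound_aux c d ρ ht
  have habs : ‖ρ‖ * ‖∫ t in c..d, E t * h t‖
      ≤ M * C := by
    have hzabs : ‖z‖ = ‖ρ‖ := by
      simp [hz]
    calc ‖ρ‖ * ‖∫ t in c..d, E t * h t‖
        = ‖z * ∫ t in c..d, E t * h t‖ := by rw [norm_mul, hzabs]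
      _ ≤ ‖E d * h d‖ + ‖E c * h c‖
          + ‖∫ t in c..d, E t * h' t‖ := by
          rw [hsplit]
          exact
            (norm_sub_le (E d * h d - E c * h c) _).trans
              (add_le_add_left (norm_sub_le _ _) _)
      _ ≤ M * ‖h d‖ + M * ‖h c‖
          + M * (∫ t in c..d, ‖h' t‖) := by
          gcongr
          · rw [norm_mul]
            exact mul_le_mul_of_nonneg_right (hEbound d ⟨hcd.le, le_refl d⟩)
              (norm_nonneg _)
          · rw [norm_mul]
            exact mul_le_mul_of_nonneg_right (hEbound c ⟨le_refl c, hcd.le⟩)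
              (norm_nonneg _)
          · calc ‖∫ t in c..d, E t * h' t‖
                ≤ ∫ t in c..d, ‖E t * h' t‖ := by
                  simpa using intervalIntegral.norm_integral_le_integral_norm (μ := volume)
                    (f := fun t => E t * h' t) hcd.le
              _ ≤ ∫ t in c..d, M * ‖h' t‖ := by
                  apply intervalIntegral.integral_mono_on hcd.le
                  · exact (continuous_norm.comp (hEc.mul hc')).intervalIntegrable _ _
                  · exact (continuous_const.mul (continuous_norm.comp hc')).intervalIntegrable _ _
                  · intro t ht
                    rw [norm_mul]
                    exact mul_le_mul_of_nonneg_right (hEbound t ht) (norm_nonneg _)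
              _ = M * ∫ t in c..d, ‖h' t‖ := by
                  rw [intervalIntegral.integral_const_mul]
      _ ≤ M * C := by rw [hC]; nlinarith [hM1, hint]
  have hρpos : 0 < ‖ρ‖ := by
    simpa [norm_pos_iff] using hρ
  rw [le_div_iff₀ hρpos]
  calc ‖∫ t in c..d, E t * h t‖ * ‖ρ‖
      = ‖ρ‖ * ‖∫ t in c..d, E t * h t‖ := mul_comm _ _
    _ ≤ M * C := habs
    _ = C * M := mul_comm _ _

theorem riemann_lebesgue_left (c d : ℝ) (hcd : c < d) (f : ℝ → ℂ)
    (hf : IntervalIntegrable f volume c d) :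
    ∀ ε > 0, ∃ R > 0, ∀ ρ : ℂ, R < ‖ρ‖ →
      ‖∫ t in c..d, Complex.exp (Complex.I * ρ * ((t : ℂ) - c)) * f t‖
        ≤ ε * Real.exp (|ρ.im| * (d - c)) := by
  intro ε hε
  have hfIoc : IntegrableOn f (Set.Ioc c d) volume := hf.1
  set F : ℝ → ℂ := (Set.Ioc c d).indicator f with hF
  have hFint : Integrable F volume := hfIoc.integrable_indicator measurableSet_Ioc
  set ε' : ℝ := ε / 3 with hε'
  have hε'pos : 0 < ε' := by positivity
  obtain ⟨g, gsupp, hgapprox, gcont, gint⟩ :=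
    hFint.exists_hasCompactSupport_integral_sub_le hε'pos
  set η : ℝ := ε' / (2 * (d - c)) with hη
  have hdc : (0:ℝ) < d - c := by linarith
  have hηpos : 0 < η := by rw [hη]; positivity
  obtain ⟨p, hp⟩ := exists_polynomial_near_of_continuousOn c d (fun t => (g t).re)
    ((Complex.continuous_re.comp gcont).continuousOn) η hηpos
  obtain ⟨q, hq⟩ := exists_polynomial_near_of_continuousOn c d (fun t => (g t).im)
    ((Complex.continuous_im.comp gcont).continuousOn) η hηpos
  set h : ℝ → ℂ := fun t => ((p.eval t : ℝ) : ℂ) + ((q.eval t : ℝ) : ℂ) * Complex.I with hh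
  set h' : ℝ → ℂ := fun t => ((p.derivative.eval t : ℝ) : ℂ)
      + ((q.derivative.eval t : ℝ) : ℂ) * Complex.I with hh'
  have hdh : ∀ t, HasDerivAt h (h' t) t := fun t =>
    ((p.hasDerivAt t).ofReal_comp).add (((q.hasDerivAt t).ofReal_comp).mul_const Complex.I)
  have hhcont : Continuous h := by fun_prop
  have hc' : Continuous h' := by fun_prop
  obtain ⟨C, hCpos, hCbound⟩ := decay_aux c d hcd h h' hdh hc'
  have hgh : ∀ t ∈ Set.Icc c d, ‖g t - h t‖ ≤ ε' / (d - c) := by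
    intro t ht
    have hre : (g t - h t).re = (g t).re - p.eval t := by simp [hh]
    have him : (g t - h t).im = (g t).im - q.eval t := by simp [hh]
    calc ‖g t - h t‖ ≤ |(g t - h t).re| + |(g t - h t).im| :=
          Complex.norm_le_abs_re_add_abs_im _
      _ ≤ η + η := by
          rw [hre, him]
          have h1 := hp t ht
          have h2 := hq t ht
          rw [abs_sub_comm] at h1 h2
          linarith
      _ = ε' / (d - c) := by rw [hη]; field_simp; ring
  refine ⟨max (C / ε') 1, lt_max_of_lt_right one_pos, fun ρ hρabs => ?_⟩
  have hρ1 : 1 < ‖ρ‖ := lt_of_le_of_lt (le_max_right _ _) hρabs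
  have hρne : ρ ≠ 0 := by
    intro h0; rw [h0] at hρ1; simp at hρ1; linarith
  set M : ℝ := Real.exp (|ρ.im| * (d - c)) with hM
  have hMpos : 0 < M := Real.exp_pos _
  set E : ℝ → ℂ := fun t => Complex.exp (Complex.I * ρ * ((t : ℂ) - c)) with hE
  have hEcont : Continuous E := by fun_prop
  have hEbound : ∀ t ∈ Set.Icc c d, ‖E t‖ ≤ M := fun t ht =>
    exp_bound_aux c d ρ ht
  -- integrabilities
  have hfgIcc : IntegrableOn (fun x => f x - g x) (Set.Icc c d) volume := by
    rw [integrableOn_Icc_iff_integrableOn_Ioc]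
    exact hfIoc.sub gint.integrableOn
  have hEfgIoc : IntegrableOn (fun x => E x * (f x - g x)) (Set.Ioc c d) volume :=
    (IntegrableOn.continuousOn_mul hEcont.continuousOn hfgIcc isCompact_Icc).mono_set
      Set.Ioc_subset_Icc_self
  have hEghIoc : IntegrableOn (fun x => E x * (g x - h x)) (Set.Ioc c d) volume :=
    ((hEcont.mul (gcont.sub hhcont)).integrableOn_Icc).mono_set Set.Ioc_subset_Icc_self
  have hEhIoc : IntegrableOn (fun x => E x * h x) (Set.Ioc c d) volume :=
    ((hEcont.mul hhcont).integrableOn_Icc).mono_set Set.Ioc_subset_Icc_self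
  -- split the integral
  rw [intervalIntegral.integral_of_le hcd.le]
  have hsplit : (∫ x in Set.Ioc c d, E x * f x)
      = (∫ x in Set.Ioc c d, E x * (f x - g x)) + (∫ x in Set.Ioc c d, E x * (g x - h x))
        + ∫ x in Set.Ioc c d, E x * h x := by
    have h12 : IntegrableOn (fun x => E x * (f x - g x) + E x * (g x - h x))
        (Set.Ioc c d) volume := hEfgIoc.add hEghIoc
    rw [← integral_add (hEfgIoc) (hEghIoc), ← integral_add h12 hEhIoc]
    apply setIntegral_congr_fun measurableSet_Ioc
    intro x _; simp; ring
  rw [hsplit]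
  -- term 1
  have hterm1 : ‖∫ x in Set.Ioc c d, E x * (f x - g x)‖ ≤ M * ε' := by
    calc ‖∫ x in Set.Ioc c d, E x * (f x - g x)‖
        ≤ ∫ x in Set.Ioc c d, ‖E x * (f x - g x)‖ := by
          simpa using
            norm_integral_le_integral_norm (μ := volume.restrict (Set.Ioc c d))
              (f := fun x => E x * (f x - g x))
      _ ≤ ∫ x in Set.Ioc c d, M * ‖f x - g x‖ := by
          apply setIntegral_mono_on hEfgIoc.norm
            ((hfIoc.sub gint.integrableOn).norm.const_mul M) measurableSet_Ioc
          intro x hx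
          rw [norm_mul]
          exact mul_le_mul_of_nonneg_right (hEbound x (Set.Ioc_subset_Icc_self hx))
            (norm_nonneg _)
      _ = M * ∫ x in Set.Ioc c d, ‖f x - g x‖ := integral_const_mul M _
      _ = M * ∫ x in Set.Ioc c d, ‖F x - g x‖ := by
          congr 1
          apply setIntegral_congr_fun measurableSet_Ioc
          intro x hx
          simp [hF, Set.indicator_of_mem hx]
      _ ≤ M * ∫ x, ‖F x - g x‖ := by
          apply mul_le_mul_of_nonneg_left _ hMpos.le
          exact setIntegral_le_integral (hFint.sub gint).norm
            (Filter.Eventually.of_forall fun x => norm_nonneg _)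
      _ ≤ M * ε' := mul_le_mul_of_nonneg_left hgapprox hMpos.le
  -- term 2
  have hterm2 : ‖∫ x in Set.Ioc c d, E x * (g x - h x)‖ ≤ M * ε' := by
    have hb : ∀ x ∈ Set.Ioc c d, ‖E x * (g x - h x)‖ ≤ M * (ε' / (d - c)) := by
      intro x hx
      rw [norm_mul]
      have hx' := Set.Ioc_subset_Icc_self hx
      exact mul_le_mul (hEbound x hx') (hgh x hx') (norm_nonneg _) hMpos.le
    calc ‖∫ x in Set.Ioc c d, E x * (g x - h x)‖
        ≤ M * (ε' / (d - c)) * (volume (Set.Ioc c d)).toReal := by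
          simpa [Measure.real] using
            norm_setIntegral_le_of_norm_le_const (μ := volume) (s := Set.Ioc c d)
              (by rw [Real.volume_Ioc]; exact ENNReal.ofReal_lt_top) hb
      _ = M * ε' := by
          rw [Real.volume_Ioc, ENNReal.toReal_ofReal hdc.le, mul_assoc,
            div_mul_cancel₀ _ (ne_of_gt hdc)]
  -- term 3
  have hterm3 : ‖∫ x in Set.Ioc c d, E x * h x‖ ≤ ε' * M := by
    have := hCbound ρ hρne
    rw [intervalIntegral.integral_of_le hcd.le] at this
    refine this.trans ?_
    rw [div_le_iff₀ (by positivity : (0:ℝ) < ‖ρ‖)]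
    have hCρ : C ≤ ε' * ‖ρ‖ := by
      have : C / ε' < ‖ρ‖ := lt_of_le_of_lt (le_max_left _ _) hρabs
      rw [div_lt_iff₀ hε'pos] at this
      nlinarith
    nlinarith
  calc ‖(∫ x in Set.Ioc c d, E x * (f x - g x))
        + (∫ x in Set.Ioc c d, E x * (g x - h x)) + ∫ x in Set.Ioc c d, E x * h x‖
      ≤ ‖∫ x in Set.Ioc c d, E x * (f x - g x)‖
        + ‖∫ x in Set.Ioc c d, E x * (g x - h x)‖
        + ‖∫ x in Set.Ioc c d, E x * h x‖ := by
        have tri : ∀ a b e : ℂ, ‖a + b + e‖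
            ≤ ‖a‖ + ‖b‖ + ‖e‖ := by
          intro a b e
          simpa using
            (norm_add_le (a + b) e).trans (add_le_add_left (norm_add_le a b) _)
        exact tri _ _ _
    _ ≤ M * ε' + M * ε' + ε' * M := by gcongr
    _ = ε * M := by rw [hε']; ring
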